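/- Let μᵣ, μₛ be probability measures and h₁, h₂, h₃ hypotheses with labeling function f. If Δεₛ(h₁,h₂) = εₛ(h₂) − εₛ(h₁) ≥ δ(μᵣ, μₛ) and Δεₛ(h₂,h₃) = εₛ(h₃) − εₛ(h₂) ≥ δ(μᵣ, μₛ), then the full ranking is preserved on the real distribution: εᵣ(h₁) ≤ εᵣ(h₂) ≤ εᵣ(h₃). -/

import Mathlib

open MeasureTheory

lemma tv_key {Ω : Type*} [MeasurableSpace Ω]
    (μr μs : Measure Ω) [IsProbabilityMeasure μr] [IsProbabilityMeasure μs]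
    {A B : Set Ω} (hA : MeasurableSet A) (hB : MeasurableSet B)
    (hgap : (μs A).toReal - (μs B).toReal ≥
      ((μr.toSignedMeasure - μs.toSignedMeasure).totalVariation Set.univ).toReal) :
    (μr B).toReal ≤ (μr A).toReal := by
  set ν := μr.toSignedMeasure - μs.toSignedMeasure with hν
  set j := ν.toJordanDecomposition
  have habs : ∀ E : Set Ω, MeasurableSet E → |ν E| ≤ (ν.totalVariation E).toReal := by
    intro E hE
    have h1 : ν E = (j.posPart E).toReal - (j.negPart E).toReal := by
      conv_lhs => rw [← ν.toSignedMeasure_toJordanDecomposition]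
      rw [JordanDecomposition.toSignedMeasure, VectorMeasure.sub_apply,
        Measure.toSignedMeasure_apply_measurable hE, Measure.toSignedMeasure_apply_measurable hE]
      rfl
    have h2 : (ν.totalVariation E).toReal = (j.posPart E).toReal + (j.negPart E).toReal := by
      rw [SignedMeasure.totalVariation, Measure.add_apply,
        ENNReal.toReal_add (measure_ne_top _ _) (measure_ne_top _ _)]
    rw [h1, h2]
    have := ENNReal.toReal_nonneg (a := j.posPart E)
    have := ENNReal.toReal_nonneg (a := j.negPart E)
    rw [abs_le]; constructor <;> linarith
  have hfin : ν.totalVariation Set.univ ≠ ⊤ := by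
    rw [SignedMeasure.totalVariation, Measure.add_apply]
    exact ENNReal.add_ne_top.2 ⟨measure_ne_top _ _, measure_ne_top _ _⟩
  have hsum : (ν.totalVariation (A \ B)).toReal + (ν.totalVariation (B \ A)).toReal
      ≤ (ν.totalVariation Set.univ).toReal := by
    rw [← ENNReal.toReal_add (ne_top_of_le_ne_top hfin (measure_mono (Set.subset_univ _))) (ne_top_of_le_ne_top hfin (measure_mono (Set.subset_univ _)))]
    exact ENNReal.toReal_mono hfin (by
      rw [← measure_union (disjoint_sdiff_sdiff) ((hB.diff hA))]
      exact measure_mono (Set.subset_univ _))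
  have hAB : ν A - ν B = ν (A \ B) - ν (B \ A) := by
    have e1 : ν A = ν (A ∩ B) + ν (A \ B) := by
      rw [← VectorMeasure.of_union (Disjoint.mono_left Set.inter_subset_right Set.disjoint_sdiff_right) (hA.inter hB) (hA.diff hB),
        Set.inter_union_diff]
    have e2 : ν B = ν (A ∩ B) + ν (B \ A) := by
      rw [← VectorMeasure.of_union (Disjoint.mono_left Set.inter_subset_left Set.disjoint_sdiff_right) (hA.inter hB) (hB.diff hA)]
      congr 1
      rw [Set.inter_comm, Set.inter_union_diff]
    rw [e1, e2]; ring
  have hνA : ν A = (μr A).toReal - (μs A).toReal := by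
    rw [hν, VectorMeasure.sub_apply, Measure.toSignedMeasure_apply_measurable hA,
      Measure.toSignedMeasure_apply_measurable hA]
    rfl
  have hνB : ν B = (μr B).toReal - (μs B).toReal := by
    rw [hν, VectorMeasure.sub_apply, Measure.toSignedMeasure_apply_measurable hB,
      Measure.toSignedMeasure_apply_measurable hB]
    rfl
  have b1 := habs _ (hA.diff hB)
  have b2 := habs _ (hB.diff hA)
  have : |ν A - ν B| ≤ (ν.totalVariation Set.univ).toReal := by
    rw [hAB]
    calc |ν (A \ B) - ν (B \ A)| ≤ |ν (A \ B)| + |ν (B \ A)| := abs_sub _ _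
    _ ≤ _ := by linarith
  rw [hνA, hνB] at this
  have := abs_le.mp this
  linarith [this.1]

theorem rank_preservation_three {Ω Y : Type*} [MeasurableSpace Ω]
    (μr μs : Measure Ω) [IsProbabilityMeasure μr] [IsProbabilityMeasure μs]
    (f h₁ h₂ h₃ : Ω → Y)
    (hm1 : MeasurableSet {x | h₁ x ≠ f x})
    (hm2 : MeasurableSet {x | h₂ x ≠ f x})
    (hm3 : MeasurableSet {x | h₃ x ≠ f x})
    (hgap12 : (μs {x | h₂ x ≠ f x}).toReal - (μs {x | h₁ x ≠ f x}).toReal ≥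
      ((μr.toSignedMeasure - μs.toSignedMeasure).totalVariation Set.univ).toReal)
    (hgap23 : (μs {x | h₃ x ≠ f x}).toReal - (μs {x | h₂ x ≠ f x}).toReal ≥
      ((μr.toSignedMeasure - μs.toSignedMeasure).totalVariation Set.univ).toReal) :
    (μr {x | h₁ x ≠ f x}).toReal ≤ (μr {x | h₂ x ≠ f x}).toReal ∧
      (μr {x | h₂ x ≠ f x}).toReal ≤ (μr {x | h₃ x ≠ f x}).toReal := by
  exact ⟨tv_key μr μs hm2 hm1 hgap12, tv_key μr μs hm3 hm2 hgap23⟩
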